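/- Let $k$ be a field, $R = k[x_0,\dots,x_r]$, and $I \subseteq R$ a homogeneous ideal. Then for every integer $m \ge 0$, $\dim_k (R/I)_m = \sum_{i=0}^{\infty} \dim_k \big(k[x_1,\dots,x_r]/K_i(I)\big)_{m-i}$, where the sum is finite since $(\bar R/K_i(I))_{m-i} = 0$ for $i > m$. -/

import Mathlib

open MvPolynomial

variable {k : Type*} [Field k] {r : ℕ}

/-- The `i`-th partial elimination ideal of `I ⊆ k[x₀,…,x_r]`, defined as the
ideal of `k[x₁,…,x_r]` generated by the coefficients of `x₀^i` in elements of
`I` of `x₀`-degree at most `i` (via the identification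
`k[x₀,…,x_r] ≃ (k[x₁,…,x_r])[x₀]` given by `finSuccEquiv`; since this set of
coefficients is itself an ideal, the span equals it). -/
noncomputable def pelIdeal (I : Ideal (MvPolynomial (Fin (r + 1)) k)) (i : ℕ) :
    Ideal (MvPolynomial (Fin r) k) :=
  Ideal.span {q | ∃ f ∈ I, (finSuccEquiv k r f).natDegree ≤ i ∧
    (finSuccEquiv k r f).coeff i = q}

/-- The Hilbert function of `k[x₁,…,x_n]/J` in degree `m`. -/
noncomputable def hilbFn (n : ℕ) (J : Ideal (MvPolynomial (Fin n) k)) (m : ℕ) : ℕ :=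
  Module.finrank k (homogeneousSubmodule (Fin n) k m) -
    Module.finrank k
      (homogeneousSubmodule (Fin n) k m ⊓ Submodule.restrictScalars k J :
        Submodule k (MvPolynomial (Fin n) k))

namespace HilbAux

/-- degree of a Finsupp on a Fintype as a full sum -/
lemma degree_eq_sum_univ {n : ℕ} (f : Fin n →₀ ℕ) : f.degree = ∑ i, f i := by
  rw [Finsupp.degree]
  exact Finset.sum_subset (Finset.subset_univ _)
    (fun x _ hx => Finsupp.notMem_support_iff.mp hx)

lemma degree_cons {n : ℕ} (y : ℕ) (s : Fin n →₀ ℕ) :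
    (Finsupp.cons y s).degree = y + s.degree := by
  rw [degree_eq_sum_univ, degree_eq_sum_univ, Fin.sum_univ_succ]
  simp

/-- the coefficient extraction linear map -/
noncomputable def cLin (k : Type*) [Field k] (r i : ℕ) :
    MvPolynomial (Fin (r + 1)) k →ₗ[k] MvPolynomial (Fin r) k where
  toFun f := (finSuccEquiv k r f).coeff i
  map_add' f g := by simp
  map_smul' a f := by
    show (finSuccEquiv k r (a • f)).coeff i = a • (finSuccEquiv k r f).coeff i
    rw [map_smul, Polynomial.coeff_smul]

@[simp] lemma cLin_apply (i : ℕ) (f : MvPolynomial (Fin (r + 1)) k) :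
    cLin k r i f = (finSuccEquiv k r f).coeff i := rfl

/-- the submodule of polynomials of x₀-degree < i -/
noncomputable def Dsub (k : Type*) [Field k] (r i : ℕ) :
    Submodule k (MvPolynomial (Fin (r + 1)) k) :=
  ((Polynomial.degreeLT (MvPolynomial (Fin r) k) i).restrictScalars k).comap
    (finSuccEquiv k r).toLinearMap

lemma mem_Dsub {i : ℕ} {f : MvPolynomial (Fin (r + 1)) k} :
    f ∈ Dsub k r i ↔ ∀ j : ℕ, i ≤ j → (finSuccEquiv k r f).coeff j = 0 := by
  rw [Dsub, Submodule.mem_comap, AlgEquiv.toLinearMap_apply,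
    Submodule.restrictScalars_mem, Polynomial.mem_degreeLT,
    Polynomial.degree_lt_iff_coeff_zero]

lemma mem_Dsub_succ {i : ℕ} {f : MvPolynomial (Fin (r + 1)) k} :
    f ∈ Dsub k r (i + 1) ↔ (finSuccEquiv k r f).natDegree ≤ i := by
  rw [mem_Dsub, Polynomial.natDegree_le_iff_coeff_eq_zero]
  exact ⟨fun h j hj => h j hj, fun h j hj => h j hj⟩

lemma Dsub_zero : Dsub k r 0 = ⊥ := by
  ext f
  simp only [Submodule.mem_bot, mem_Dsub]
  constructor
  · intro h
    have : finSuccEquiv k r f = 0 := Polynomial.ext fun n => h n (Nat.zero_le n)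
    simpa using (map_eq_zero_iff _ (finSuccEquiv k r).injective).mp this
  · rintro rfl; simp

lemma Dsub_inf_ker (i : ℕ) :
    Dsub k r (i + 1) ⊓ LinearMap.ker (cLin k r i) = Dsub k r i := by
  ext f
  simp only [Submodule.mem_inf, LinearMap.mem_ker, cLin_apply, mem_Dsub]
  constructor
  · rintro ⟨h1, h2⟩ j hj
    rcases eq_or_lt_of_le hj with rfl | hlt
    · exact h2
    · exact h1 j hlt
  · intro h
    exact ⟨fun j hj => h j (by omega), h i le_rfl⟩

/-- homogeneous component commutes with coefficient extraction, `i ≤ n` case -/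
lemma coeff_finSuccEquiv_homogeneousComponent {n i : ℕ} (hin : i ≤ n)
    (f : MvPolynomial (Fin (r + 1)) k) :
    (finSuccEquiv k r (homogeneousComponent n f)).coeff i =
      homogeneousComponent (n - i) ((finSuccEquiv k r f).coeff i) := by
  apply MvPolynomial.ext
  intro d
  rw [finSuccEquiv_coeff_coeff, coeff_homogeneousComponent, coeff_homogeneousComponent,
    degree_cons]
  by_cases h : d.degree = n - i
  · rw [if_pos (by omega), if_pos h, finSuccEquiv_coeff_coeff]
  · rw [if_neg (by omega), if_neg h]

/-- homogeneous component commutes with coefficient extraction, `n < i` case -/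
lemma coeff_finSuccEquiv_homogeneousComponent_eq_zero {n i : ℕ} (hin : n < i)
    (f : MvPolynomial (Fin (r + 1)) k) :
    (finSuccEquiv k r (homogeneousComponent n f)).coeff i = 0 := by
  apply MvPolynomial.ext
  intro d
  rw [finSuccEquiv_coeff_coeff, coeff_homogeneousComponent, degree_cons,
    if_neg (by omega), coeff_zero]

lemma homog_mem_Dsub {m : ℕ} {f : MvPolynomial (Fin (r + 1)) k}
    (hf : f ∈ homogeneousSubmodule (Fin (r + 1)) k m) : f ∈ Dsub k r (m + 1) := by
  rw [mem_Dsub]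
  intro j hj
  have : homogeneousComponent m f = f := by
    rw [homogeneousComponent_of_mem hf, if_pos rfl]
  rw [← this]
  exact coeff_finSuccEquiv_homogeneousComponent_eq_zero (by omega) f

lemma mem_pelIdeal_iff {I : Ideal (MvPolynomial (Fin (r + 1)) k)} {i : ℕ}
    {q : MvPolynomial (Fin r) k} :
    q ∈ pelIdeal I i ↔ ∃ f ∈ I, (finSuccEquiv k r f).natDegree ≤ i ∧
      (finSuccEquiv k r f).coeff i = q := by
  constructor
  · intro hq
    refine Submodule.span_induction ?_ ?_ ?_ ?_ hq
    · exact fun x hx => hx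
    · exact ⟨0, I.zero_mem, by simp⟩
    · rintro x y - - ⟨f, hfI, hfd, rfl⟩ ⟨g, hgI, hgd, rfl⟩
      refine ⟨f + g, I.add_mem hfI hgI, ?_, by simp⟩
      rw [map_add]
      exact (Polynomial.natDegree_add_le _ _).trans (by omega)
    · rintro a x - ⟨f, hfI, hfd, rfl⟩
      refine ⟨(finSuccEquiv k r).symm (Polynomial.C a) * f, I.mul_mem_left _ hfI, ?_, ?_⟩
      · rw [map_mul, AlgEquiv.apply_symm_apply]
        exact (Polynomial.natDegree_C_mul_le _ _).trans hfd
      · rw [map_mul, AlgEquiv.apply_symm_apply, Polynomial.coeff_C_mul, smul_eq_mul]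
  · intro ⟨f, hfI, hfd, hfq⟩
    exact Ideal.subset_span ⟨f, hfI, hfd, hfq⟩

lemma pelIdeal_top (i : ℕ) : pelIdeal (⊤ : Ideal (MvPolynomial (Fin (r + 1)) k)) i = ⊤ := by
  rw [eq_top_iff]
  intro q _
  rw [mem_pelIdeal_iff]
  refine ⟨(finSuccEquiv k r).symm (Polynomial.C q * Polynomial.X ^ i), trivial, ?_, ?_⟩
  · rw [AlgEquiv.apply_symm_apply]
    exact (Polynomial.natDegree_C_mul_le _ _).trans (Polynomial.natDegree_X_pow_le _)
  · rw [AlgEquiv.apply_symm_apply, Polynomial.coeff_C_mul, Polynomial.coeff_X_pow,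
      if_pos rfl, mul_one]

/-- the key image identification -/
lemma map_cLin_eq (I : Ideal (MvPolynomial (Fin (r + 1)) k))
    (hI : ∀ f ∈ I, ∀ n : ℕ, homogeneousComponent n f ∈ I) {m i : ℕ} (him : i ≤ m) :
    Submodule.map (cLin k r i)
      (homogeneousSubmodule (Fin (r + 1)) k m ⊓ Submodule.restrictScalars k I
        ⊓ Dsub k r (i + 1)) =
    homogeneousSubmodule (Fin r) k (m - i) ⊓ Submodule.restrictScalars k (pelIdeal I i) := by
  apply le_antisymm
  · rintro q ⟨f, ⟨⟨hfm, hfI⟩, hfd⟩, rfl⟩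
    replace hfd : (finSuccEquiv k r f).natDegree ≤ i := mem_Dsub_succ.mp hfd
    constructor
    · exact (hfm : f.IsHomogeneous m).finSuccEquiv_coeff_isHomogeneous i (m - i) (by omega)
    · exact Ideal.subset_span ⟨f, hfI, hfd, rfl⟩
  · rintro q ⟨hqm, hqK⟩
    replace hqK : q ∈ pelIdeal I i := hqK
    rw [mem_pelIdeal_iff] at hqK
    obtain ⟨f, hfI, hfd, hfq⟩ := hqK
    refine ⟨homogeneousComponent m f, ⟨⟨homogeneousComponent_mem m f, hI f hfI m⟩, ?_⟩, ?_⟩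
    · show homogeneousComponent m f ∈ Dsub k r (i + 1)
      rw [mem_Dsub_succ, Polynomial.natDegree_le_iff_coeff_eq_zero]
      intro j hj
      rcases le_or_gt j m with hjm | hjm
      · rw [coeff_finSuccEquiv_homogeneousComponent hjm,
          Polynomial.coeff_eq_zero_of_natDegree_lt (by omega), map_zero]
      · exact coeff_finSuccEquiv_homogeneousComponent_eq_zero hjm f
    · rw [cLin_apply, coeff_finSuccEquiv_homogeneousComponent him, hfq,
        homogeneousComponent_of_mem (by exact hqm), if_pos rfl]

instance fd_homog (n m : ℕ) : FiniteDimensional k (homogeneousSubmodule (Fin n) k m) := by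
  have hS : ({d : Fin n →₀ ℕ | d.degree = m}).Finite := by
    apply (Set.finite_Icc (0 : Fin n →₀ ℕ)
      (Finsupp.equivFunOnFinite.symm fun _ => m)).subset
    intro d hd
    simp only [Set.mem_Icc]
    refine ⟨zero_le, ?_⟩
    rw [Finsupp.le_def]
    intro j
    calc d j ≤ d.degree := Finsupp.le_degree j d
    _ = m := hd
  haveI := hS.fintype
  have e1 : (homogeneousSubmodule (Fin n) k m) ≃ₗ[k]
      (Finsupp.supported k k {d : Fin n →₀ ℕ | d.degree = m}) :=
    (LinearEquiv.ofEq _ _ (homogeneousSubmodule_eq_finsupp_supported (Fin n) k m)).trans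
      (((AddMonoidAlgebra.coeffLinearEquiv k).submoduleMap _).trans
        (LinearEquiv.ofEq _ _ (Submodule.map_comap_eq_of_surjective
          (AddMonoidAlgebra.coeffLinearEquiv k).surjective _)))
  have e2 := Finsupp.supportedEquivFinsupp (M := k) (R := k)
    {d : Fin n →₀ ℕ | d.degree = m}
  have e3 := Finsupp.linearEquivFunOnFinite k k {d : Fin n →₀ ℕ | d.degree = m}
  exact Module.Finite.equiv (e1.trans ((e2.trans e3).symm.symm)).symm

set_option synthInstance.maxHeartbeats 1000000 in
set_option maxHeartbeats 2000000 in
/-- the counting lemma: rank of filtered pieces -/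
lemma finrank_inf_Dsub (W : Submodule k (MvPolynomial (Fin (r + 1)) k))
    [FiniteDimensional k W] (i : ℕ) :
    Module.finrank k (W ⊓ Dsub k r i : Submodule k (MvPolynomial (Fin (r + 1)) k)) =
      ∑ j ∈ Finset.range i,
        Module.finrank k ((W ⊓ Dsub k r (j + 1)).map (cLin k r j)) := by
  induction i with
  | zero => simp [Dsub_zero]
  | succ i ih =>
    set p : Submodule k (MvPolynomial (Fin (r + 1)) k) := W ⊓ Dsub k r (i + 1) with hp
    haveI : FiniteDimensional k p := Submodule.finiteDimensional_inf_left W (Dsub k r (i + 1))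
    have rn := LinearMap.finrank_range_add_finrank_ker ((cLin k r i).domRestrict p)
    rw [LinearMap.range_domRestrict, LinearMap.ker_domRestrict] at rn
    have hker : (LinearMap.ker (cLin k r i)).comap p.subtype =
        (LinearMap.ker (cLin k r i) ⊓ p).comap p.subtype := by
      ext x
      simp [Submodule.mem_comap, x.2]
    have hfr : Module.finrank k ((LinearMap.ker (cLin k r i)).comap p.subtype) =
        Module.finrank k (LinearMap.ker (cLin k r i) ⊓ p :
          Submodule k (MvPolynomial (Fin (r + 1)) k)) := by
      rw [hker]
      exact (Submodule.comapSubtypeEquivOfLe inf_le_right).finrank_eq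
    have hWD : LinearMap.ker (cLin k r i) ⊓ p = W ⊓ Dsub k r i := by
      rw [hp, inf_comm, inf_assoc, Dsub_inf_ker]
    rw [hfr, hWD, ih] at rn
    rw [Finset.sum_range_succ, ← rn, ← hp]
    ring

lemma sum_nat_sub {ι : Type*} (s : Finset ι) (f g : ι → ℕ) (h : ∀ i ∈ s, g i ≤ f i) :
    ∑ i ∈ s, (f i - g i) = ∑ i ∈ s, f i - ∑ i ∈ s, g i := by
  classical
  induction s using Finset.induction with
  | empty => simp
  | insert a s ha ih =>
    have h1 := h a (Finset.mem_insert_self a s)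
    have h2 : ∑ i ∈ s, g i ≤ ∑ i ∈ s, f i :=
      Finset.sum_le_sum fun i hi => h i (Finset.mem_insert_of_mem hi)
    rw [Finset.sum_insert ha, Finset.sum_insert ha, Finset.sum_insert ha,
      ih fun i hi => h i (Finset.mem_insert_of_mem hi)]
    omega

set_option synthInstance.maxHeartbeats 1000000 in
set_option maxHeartbeats 2000000 in
lemma key_count (J : Ideal (MvPolynomial (Fin (r + 1)) k))
    (hJ : ∀ f ∈ J, ∀ n : ℕ, homogeneousComponent n f ∈ J) (m : ℕ) :
    Module.finrank k
      (homogeneousSubmodule (Fin (r + 1)) k m ⊓ Submodule.restrictScalars k J :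
        Submodule k (MvPolynomial (Fin (r + 1)) k)) =
    ∑ i ∈ Finset.range (m + 1), Module.finrank k
      (homogeneousSubmodule (Fin r) k (m - i) ⊓ Submodule.restrictScalars k (pelIdeal J i) :
        Submodule k (MvPolynomial (Fin r) k)) := by
  set W : Submodule k (MvPolynomial (Fin (r + 1)) k) :=
    homogeneousSubmodule (Fin (r + 1)) k m ⊓ Submodule.restrictScalars k J with hW
  haveI : FiniteDimensional k W := Submodule.finiteDimensional_inf_left _ _
  have hWD : W ⊓ Dsub k r (m + 1) = W :=
    inf_eq_left.mpr (le_trans inf_le_left fun f hf => homog_mem_Dsub hf)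
  rw [← hWD, finrank_inf_Dsub]
  apply Finset.sum_congr rfl
  intro i hi
  rw [hW, map_cLin_eq J hJ (by simpa [Nat.lt_succ_iff] using hi)]

end HilbAux

set_option synthInstance.maxHeartbeats 1000000 in
set_option maxHeartbeats 2000000 in
/-- For a homogeneous ideal `I ⊆ k[x₀,…,x_r]` and every
`m ≥ 0`, `dim_k (R/I)_m = ∑_{i=0}^{∞} dim_k (k[x₁,…,x_r]/K_i(I))_{m-i}`;
the sum is finite since the terms vanish for `i > m`, so it is written as a
sum over `0 ≤ i ≤ m`. -/
theorem hilbFn_decomposition (I : Ideal (MvPolynomial (Fin (r + 1)) k))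
    (hI : ∀ f ∈ I, ∀ n : ℕ, homogeneousComponent n f ∈ I) :
    ∀ m : ℕ, hilbFn (r + 1) I m =
      ∑ i ∈ Finset.range (m + 1), hilbFn r (pelIdeal I i) (m - i) := by
  intro m
  have htop := HilbAux.key_count (k := k) (r := r) ⊤ (fun f _ n => trivial) m
  have e1 : homogeneousSubmodule (Fin (r + 1)) k m ⊓
      Submodule.restrictScalars k (⊤ : Ideal (MvPolynomial (Fin (r + 1)) k)) =
      homogeneousSubmodule (Fin (r + 1)) k m := by
    rw [Submodule.restrictScalars_top]; exact inf_top_eq _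
  have e2 : ∀ i : ℕ, homogeneousSubmodule (Fin r) k (m - i) ⊓
      Submodule.restrictScalars k (pelIdeal (⊤ : Ideal (MvPolynomial (Fin (r + 1)) k)) i) =
      homogeneousSubmodule (Fin r) k (m - i) := by
    intro i
    rw [HilbAux.pelIdeal_top, Submodule.restrictScalars_top]; exact inf_top_eq _
  rw [(LinearEquiv.ofEq _ _ e1).finrank_eq,
    Finset.sum_congr rfl fun i _ => (LinearEquiv.ofEq _ _ (e2 i)).finrank_eq] at htop
  have hI' := HilbAux.key_count I hI m
  unfold hilbFn
  rw [hI', htop, ← HilbAux.sum_nat_sub]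
  intro i hi
  haveI := HilbAux.fd_homog (k := k) r (m - i)
  exact Submodule.finrank_mono inf_le_left
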